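/- Let a < b be real numbers and let h : [a,b] → ℝ be a nonnegative convex function that is differentiable on [a,b] with derivative h′. Then 2·((b−a)/2)² + h(a)² + h(b)² ≥ 2·∫_a^b h(x)·√(1 + h′(x)²) dx, with equality if and only if there exists α ∈ ℝ such that h(x) = αx + ((√(1+α²) − α)/2)·b − ((√(1+α²) + α)/2)·a for all x ∈ [a,b]. -/

import Mathlib

open Set intervalIntegral MeasureTheory

noncomputable section
set_option maxHeartbeats 1000000

lemma sigma_sq (τ : ℝ) : (Real.sqrt (1 + τ^2))^2 = 1 + τ^2 :=
  Real.sq_sqrt (by positivity)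
lemma sigma_pos (τ : ℝ) : 0 < Real.sqrt (1 + τ^2) :=
  Real.sqrt_pos.mpr (by positivity)
lemma sigma_gt (τ : ℝ) : |τ| < Real.sqrt (1 + τ^2) := by
  have h1 := sigma_sq τ; have h2 := sigma_pos τ
  nlinarith [abs_nonneg τ, sq_abs τ]
lemma q_pos (τ : ℝ) : 0 < Real.sqrt (1 + τ^2) - τ := by
  have := sigma_gt τ; have := le_abs_self τ; linarith
lemma p_pos (τ : ℝ) : 0 < τ + Real.sqrt (1 + τ^2) := by
  have := sigma_gt τ; have := neg_abs_le τ; linarith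
lemma qp_one (τ : ℝ) : (Real.sqrt (1 + τ^2) - τ) * (τ + Real.sqrt (1 + τ^2)) = 1 := by
  have h1 := sigma_sq τ; nlinarith
lemma p_mono {β τ : ℝ} (h : β ≤ τ) :
    β + Real.sqrt (1 + β^2) ≤ τ + Real.sqrt (1 + τ^2) := by
  have h1 := sigma_sq β; have h2 := sigma_sq τ
  have h3 := sigma_gt β; have h4 := sigma_gt τ
  have h5 := abs_nonneg β; have h6 := abs_nonneg τ
  have h7 := neg_abs_le β; have h8 := neg_abs_le τ
  have h9 := le_abs_self β; have h10 := le_abs_self τ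
  nlinarith [mul_pos (q_pos β) (q_pos τ)]
lemma q_anti {β τ : ℝ} (h : β ≤ τ) :
    Real.sqrt (1 + τ^2) - τ ≤ Real.sqrt (1 + β^2) - β := by
  have h1 := sigma_sq β; have h2 := sigma_sq τ
  have h7 := neg_abs_le β; have h8 := neg_abs_le τ
  have h9 := le_abs_self β; have h10 := le_abs_self τ
  have h5 := abs_nonneg β; have h6 := abs_nonneg τ
  nlinarith [mul_pos (sigma_pos β) (sigma_pos τ), sigma_gt β, sigma_gt τ]
lemma p_inj {β τ : ℝ} (h : β + Real.sqrt (1 + β^2) = τ + Real.sqrt (1 + τ^2)) : β = τ := by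
  have h1 := sigma_sq β; have h2 := sigma_sq τ
  have hA : (β + Real.sqrt (1+β^2)) * (Real.sqrt (1+β^2) - β) = 1 := by nlinarith
  have hB : (τ + Real.sqrt (1+τ^2)) * (Real.sqrt (1+τ^2) - τ) = 1 := by nlinarith
  have hP := p_pos β
  rw [h] at hA
  have : Real.sqrt (1+β^2) - β = Real.sqrt (1+τ^2) - τ := by
    have hP' := p_pos τ
    rw [h] at hP
    exact mul_left_cancel₀ (ne_of_gt hP) (hA.trans hB.symm)
  linarith [h, this]

lemma primitive_sq {f : ℝ → ℝ} {a b : ℝ} (hab : a ≤ b)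
    (hf : IntegrableOn f (Ioc a b)) :
    ∫ x in Ioc a b, f x * ∫ y in Ioc a x, f y =
      (∫ y in Ioc a b, f y)^2 / 2 := by
  set ν := volume.restrict (Ioc a b) with hν
  have hfν : Integrable f ν := hf
  set G : ℝ × ℝ → ℝ := fun z => f z.1 * f z.2 with hG
  have hGint : Integrable G (ν.prod ν) := Integrable.mul_prod hfν hfν
  set s : Set (ℝ × ℝ) := {z | z.2 ≤ z.1} with hs
  have hsm : MeasurableSet s := measurableSet_le measurable_snd measurable_fst
  have hFint : Integrable (s.indicator G) (ν.prod ν) := hGint.indicator hsm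
  have swap := MeasureTheory.integral_integral_swap (f := fun x y => s.indicator G (x, y))
    (μ := ν) (ν := ν) (by exact hFint)
  set Q : ℝ → ℝ := fun x => ∫ y in Ioc a x, f y with hQ
  set Qt : ℝ := ∫ y in Ioc a b, f y with hQt
  -- inner integral, first order
  have hQdef : ∀ x ∈ Ioc a b, (∫ y, s.indicator G (x, y) ∂ν) = f x * Q x := by
    intro x hx
    have e1 : (fun y => s.indicator G (x, y)) = (Iic x).indicator (fun y => f x * f y) := by
      funext y
      by_cases hxy : y ≤ x
      · rw [Set.indicator_of_mem (by exact hxy : (x,y) ∈ s),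
          Set.indicator_of_mem (by exact hxy)]
      · rw [Set.indicator_of_notMem (by exact hxy : (x,y) ∉ s),
          Set.indicator_of_notMem (by exact hxy)]
    rw [e1, hν, MeasureTheory.integral_indicator measurableSet_Iic,
      Measure.restrict_restrict measurableSet_Iic, MeasureTheory.integral_const_mul, Set.inter_comm,
      Set.Ioc_inter_Iic, min_eq_right hx.2]
  -- inner integral, second order
  have hRdef : ∀ y ∈ Ioc a b, (∫ x, s.indicator G (x, y) ∂ν) = (Qt - Q y) * f y := by
    intro y hy
    have e1 : (fun x => s.indicator G (x, y)) = (Ici y).indicator (fun x => f x * f y) := by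
      funext x
      by_cases hxy : y ≤ x
      · rw [Set.indicator_of_mem (by exact hxy : (x,y) ∈ s),
          Set.indicator_of_mem (by exact hxy)]
      · rw [Set.indicator_of_notMem (by exact hxy : (x,y) ∉ s),
          Set.indicator_of_notMem (by exact hxy)]
    have e2 : Ici y ∩ Ioc a b = Icc y b := by
      ext z
      simp only [mem_inter_iff, mem_Ici, mem_Ioc, mem_Icc]
      exact ⟨fun ⟨h1, h2, h3⟩ => ⟨h1, h3⟩, fun ⟨h1, h2⟩ => ⟨h1, hy.1.trans_le h1, h2⟩⟩
    have e3 : ∫ x in Ici y ∩ Ioc a b, f x * f y = ∫ x in Ioc y b, f x * f y := by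
      rw [e2, MeasureTheory.integral_Icc_eq_integral_Ioc]
    rw [e1, hν, MeasureTheory.integral_indicator measurableSet_Ici,
      Measure.restrict_restrict measurableSet_Ici]
    rw [e3, MeasureTheory.integral_mul_const]
    have e4 : ∫ x in Ioc y b, f x = Qt - Q y := by
      have hsplit : Q y + ∫ x in Ioc y b, f x = Qt := by
        rw [hQ, hQt, ← MeasureTheory.setIntegral_union (Set.Ioc_disjoint_Ioc_of_le le_rfl)
          measurableSet_Ioc (hf.mono_set (Set.Ioc_subset_Ioc le_rfl hy.2))
          (hf.mono_set (Set.Ioc_subset_Ioc hy.1.le le_rfl)),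
          Set.Ioc_union_Ioc_eq_Ioc hy.1.le hy.2]
      linarith
    rw [e4]
  -- continuity and integrability of Q·f
  have hQcont : ContinuousOn Q (Icc a b) :=
    intervalIntegral.continuousOn_primitive (Iff.mpr integrableOn_Icc_iff_integrableOn_Ioc hf)
  have hQmeas : AEStronglyMeasurable Q ν :=
    (hQcont.mono Ioc_subset_Icc_self).aestronglyMeasurable measurableSet_Ioc
  have hQbd : ∀ᵐ x ∂ν, ‖Q x‖ ≤ ∫ y in Ioc a b, ‖f y‖ := by
    rw [hν, ae_restrict_iff' measurableSet_Ioc]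
    filter_upwards [] with x hx
    calc ‖Q x‖ ≤ ∫ y in Ioc a x, ‖f y‖ := norm_integral_le_integral_norm _
      _ ≤ ∫ y in Ioc a b, ‖f y‖ := by
          apply setIntegral_mono_set hf.norm
          · filter_upwards [] with z using norm_nonneg _
          · exact (Set.Ioc_subset_Ioc le_rfl hx.2).eventuallyLE
  have hQfint : Integrable (fun y => Q y * f y) ν :=
    hfν.bdd_mul hQmeas hQbd
  -- rewrite the two iterated integrals
  have L1 : (∫ x, (∫ y, s.indicator G (x, y) ∂ν) ∂ν) = ∫ x, Q x * f x ∂ν := by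
    rw [hν]
    refine setIntegral_congr_fun measurableSet_Ioc fun x hx => ?_
    rw [← hν, hQdef x hx, mul_comm]
  have L2 : (∫ y, (∫ x, s.indicator G (x, y) ∂ν) ∂ν) = Qt * Qt - ∫ y, Q y * f y ∂ν := by
    have : (∫ y, (∫ x, s.indicator G (x, y) ∂ν) ∂ν) = ∫ y, (Qt * f y - Q y * f y) ∂ν := by
      rw [hν]
      refine setIntegral_congr_fun measurableSet_Ioc fun y hy => ?_
      rw [← hν, hRdef y hy]; ring
    rw [this, integral_sub (hfν.const_mul Qt) hQfint, MeasureTheory.integral_const_mul, ← hQt]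
  have key : ∫ x, Q x * f x ∂ν = Qt * Qt - ∫ y, Q y * f y ∂ν :=
    L1.symm.trans (swap.trans L2)
  have : (∫ x in Ioc a b, f x * Q x) = ∫ x, Q x * f x ∂ν := by
    rw [hν]
    exact setIntegral_congr_fun measurableSet_Ioc fun x hx => mul_comm _ _
  rw [this]
  nlinarith [key]

/-- For a nonnegative convex differentiable function `h` on `[a,b]`:
`2((b−a)/2)² + h(a)² + h(b)² ≥ 2∫_a^b h(x)√(1 + h′(x)²) dx`, with equality iff
`h(x) = αx + ((√(1+α²) − α)/2)b − ((√(1+α²) + α)/2)a` for some `α ∈ ℝ`. -/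
theorem convex_function_arclength_inequality
    (a b : ℝ) (hab : a < b) (h h' : ℝ → ℝ)
    (hconv : ConvexOn ℝ (Icc a b) h)
    (hnonneg : ∀ x ∈ Icc a b, 0 ≤ h x)
    (hderiv : ∀ x ∈ Icc a b, HasDerivWithinAt h (h' x) (Icc a b) x) :
    2 * (∫ x in a..b, h x * Real.sqrt (1 + h' x ^ 2))
      ≤ 2 * ((b - a) / 2) ^ 2 + h a ^ 2 + h b ^ 2 ∧
    (2 * (∫ x in a..b, h x * Real.sqrt (1 + h' x ^ 2))
        = 2 * ((b - a) / 2) ^ 2 + h a ^ 2 + h b ^ 2 ↔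
      ∃ α : ℝ, ∀ x ∈ Icc a b,
        h x = α * x + (Real.sqrt (1 + α ^ 2) - α) / 2 * b
          - (Real.sqrt (1 + α ^ 2) + α) / 2 * a) := by
  have hab' : a ≤ b := hab.le
  have hicc : uIcc a b = Icc a b := uIcc_of_le hab'
  set σ : ℝ → ℝ := fun x => Real.sqrt (1 + h' x ^ 2) with hσdef
  set p : ℝ → ℝ := fun x => h' x + σ x with hpdef
  set q : ℝ → ℝ := fun x => σ x - h' x with hqdef
  -- monotonicity of h'
  have hmono : MonotoneOn h' (Icc a b) := by
    intro x hx y hy hxy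
    rcases eq_or_lt_of_le hxy with rfl | hlt
    · exact le_rfl
    · exact (hconv.le_slope_of_hasDerivWithinAt hx hy hlt (hderiv x hx)).trans
        (hconv.slope_le_of_hasDerivWithinAt hx hy hlt (hderiv y hy))
  have hpmono : MonotoneOn p (Icc a b) := by
    intro x hx y hy hxy
    have := p_mono (hmono hx hy hxy)
    simpa [hpdef, hσdef, add_comm] using this
  have hqanti : AntitoneOn q (Icc a b) := by
    intro x hx y hy hxy
    have := q_anti (hmono hx hy hxy)
    simpa [hqdef, hσdef] using this
  -- integrability
  have hpi : IntervalIntegrable p volume a b := (hicc ▸ hpmono).intervalIntegrable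
  have hqi : IntervalIntegrable q volume a b := (hicc ▸ hqanti).intervalIntegrable
  have hti : IntervalIntegrable h' volume a b := by
    have e : h' = fun x => (p x - q x)/2 := by
      funext x; simp only [hpdef, hqdef]; ring
    rw [e]; exact (hpi.sub hqi).div_const 2
  have hσi : IntervalIntegrable σ volume a b := by
    have e : σ = fun x => (p x + q x)/2 := by
      funext x; simp only [hpdef, hqdef]; ring
    rw [e]; exact (hpi.add hqi).div_const 2
  have hsub : ∀ x ∈ Icc a b, ∀ {f : ℝ → ℝ}, IntervalIntegrable f volume a b →
      IntervalIntegrable f volume a x := by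
    intro x hx f hf
    exact hf.mono_set (by rw [hicc, uIcc_of_le hx.1]; exact Icc_subset_Icc le_rfl hx.2)
  have hconth : ContinuousOn h (Icc a b) := fun x hx => (hderiv x hx).continuousWithinAt
  -- FTC for h
  have hftc : ∀ x ∈ Icc a b, (∫ y in a..x, h' y) = h x - h a := by
    intro x hx
    refine integral_eq_sub_of_hasDeriv_right_of_le hx.1
      (hconth.mono (Icc_subset_Icc le_rfl hx.2)) (fun y hy => ?_) (hsub x hx hti)
    have hyI : y ∈ Icc a b := ⟨hy.1.le, (hy.2.trans_le hx.2).le⟩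
    exact (((hderiv y hyI).hasDerivAt
      (Icc_mem_nhds hy.1 (hy.2.trans_le hx.2))).hasDerivWithinAt)
  -- FTC for (h-h a)^2
  have hftc2 : (∫ y in a..b, (2*(h y - h a)) * h' y) = (h b - h a)^2 := by
    have := integral_eq_sub_of_hasDeriv_right_of_le hab'
      (f := fun y => (h y - h a)^2) (f' := fun y => (2*(h y - h a)) * h' y)
      ((hconth.sub continuousOn_const).pow 2) (fun y hy => ?_) ?_
    · rw [this]; simp
    · have H := ((hderiv y ⟨hy.1.le, hy.2.le⟩).hasDerivAt (Icc_mem_nhds hy.1 hy.2))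
      have := ((H.sub_const (h a)).fun_pow 2)
      convert this.hasDerivWithinAt using 1
      ring
    · exact hti.continuousOn_mul
        (by rw [hicc]; exact continuousOn_const.mul (hconth.sub continuousOn_const))
  -- primitives
  set P : ℝ → ℝ := fun x => ∫ y in a..x, p y with hPdef
  set Ψ : ℝ → ℝ := fun x => ∫ y in a..x, q y with hΨdef
  have hPdecomp : ∀ x ∈ Icc a b, P x = Ψ x + 2*(h x - h a) := by
    intro x hx
    have e : ∀ y, p y = q y + 2 * h' y := by
      intro y; simp only [hpdef, hqdef]; ring
    have : P x = (∫ y in a..x, q y) + ∫ y in a..x, 2 * h' y := by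
      rw [hPdef]
      simp only [e]
      exact integral_add (hsub x hx hqi) ((hsub x hx hti).const_mul 2)
    rw [this, intervalIntegral.integral_const_mul, hftc x hx, hΨdef]
  -- pointwise bound  q x * P x ≤ x - a
  have hWle : ∀ x ∈ Icc a b, q x * P x ≤ x - a := by
    intro x hx
    have hq0 : 0 < q x := q_pos (h' x)
    have hPle : P x ≤ (x - a) * p x := by
      have : P x ≤ ∫ _y in a..x, p x := by
        refine integral_mono_on hx.1 (hsub x hx hpi) intervalIntegrable_const ?_
        intro y hy
        exact hpmono ⟨hy.1, hy.2.trans hx.2⟩ hx hy.2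
      have h2 : (∫ _y in a..x, p x) = (x-a) * p x := by
        rw [intervalIntegral.integral_const, smul_eq_mul]
      linarith [this]
    calc q x * P x ≤ q x * ((x - a) * p x) :=
          mul_le_mul_of_nonneg_left hPle hq0.le
      _ = (x - a) * (q x * p x) := by ring
      _ = x - a := by
          have : q x * p x = 1 := qp_one (h' x)
          rw [this, mul_one]
  -- continuity of P, Ψ
  have hprim : ∀ {f : ℝ → ℝ}, IntervalIntegrable f volume a b →
      ContinuousOn (fun x => ∫ y in a..x, f y) (Icc a b) := by
    intro f hf
    have := intervalIntegral.continuousOn_primitive (μ := volume) (a := a) (b := b) (f := f)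
      (Iff.mpr integrableOn_Icc_iff_integrableOn_Ioc hf.1)
    refine this.congr fun x hx => ?_
    rw [intervalIntegral.integral_of_le hx.1]
  have hPcont : ContinuousOn P (Icc a b) := hprim hpi
  have hΨcont : ContinuousOn Ψ (Icc a b) := hprim hqi
  have hqPint : IntervalIntegrable (fun x => q x * P x) volume a b :=
    hqi.mul_continuousOn (by rw [hicc]; exact hPcont)
  -- the three integral identities
  set S : ℝ := ∫ x in a..b, σ x with hSdef
  set I : ℝ := ∫ x in a..b, h x * σ x with hIdef
  set T : ℝ := h b - h a with hTdef
  have hΨb : Ψ b = S - T := by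
    show (∫ y in a..b, q y) = S - T
    have : (∫ y in a..b, q y) = (∫ y in a..b, σ y) - ∫ y in a..b, h' y := by
      simp only [hqdef]
      exact integral_sub hσi hti
    rw [this, hftc b ⟨hab', le_rfl⟩]
  have Hs3 : (∫ x in a..b, q x * Ψ x) = (S - T)^2/2 := by
    rw [← hΨb]
    have e1 : (∫ x in a..b, q x * Ψ x) = ∫ x in Ioc a b, q x * Ψ x :=
      intervalIntegral.integral_of_le hab'
    have e2 : (∫ x in Ioc a b, q x * Ψ x) = ∫ x in Ioc a b, q x * ∫ y in Ioc a x, q y := by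
      refine setIntegral_congr_fun measurableSet_Ioc fun x hx => ?_
      simp only [hΨdef]
      rw [intervalIntegral.integral_of_le hx.1.le]
    have e3 := primitive_sq hab' hqi.1
    have e4 : Ψ b = ∫ y in Ioc a b, q y := by
      show (∫ y in a..b, q y) = _
      exact intervalIntegral.integral_of_le hab'  
    rw [e1, e2, e3, e4]
  have Hs1 : (∫ x in a..b, (2*(h x - h a)) * σ x) = 2*I - 2*(h a)*S := by
    have e : ∀ x, (2*(h x - h a)) * σ x = 2*(h x * σ x) - (2*(h a))*σ x := by
      intro x; ring
    simp only [e]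
    rw [integral_sub ((hσi.continuousOn_mul (by rw [hicc]; exact hconth)).const_mul 2)
      (hσi.const_mul _), intervalIntegral.integral_const_mul,
      intervalIntegral.integral_const_mul, hIdef, hSdef]
  have HqP : (∫ x in a..b, q x * P x) = (S-T)^2/2 + (2*I - 2*(h a)*S) - T^2 := by
    have e : ∀ x ∈ Icc a b, q x * P x
        = q x * Ψ x + ((2*(h x - h a)) * σ x - (2*(h x - h a)) * h' x) := by
      intro x hx
      rw [hPdecomp x hx]
      simp only [hqdef]; ring
    have e2 : (∫ x in a..b, q x * P x) = ∫ x in a..b,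
        (q x * Ψ x + ((2*(h x - h a)) * σ x - (2*(h x - h a)) * h' x)) := by
      refine intervalIntegral.integral_congr ?_
      rw [hicc]; exact e
    have int1 : IntervalIntegrable (fun x => q x * Ψ x) volume a b :=
      hqi.mul_continuousOn (by rw [hicc]; exact hΨcont)
    have int2 : IntervalIntegrable (fun x => (2*(h x - h a)) * σ x) volume a b :=
      hσi.continuousOn_mul
        (by rw [hicc]; exact continuousOn_const.mul (hconth.sub continuousOn_const))
    have int3 : IntervalIntegrable (fun x => (2*(h x - h a)) * h' x) volume a b :=
      hti.continuousOn_mul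
        (by rw [hicc]; exact continuousOn_const.mul (hconth.sub continuousOn_const))
    rw [e2, integral_add int1 (int2.sub int3), integral_sub int2 int3, Hs1, hftc2, Hs3]
    ring
  have hXint : IntervalIntegrable (fun x => x - a) volume a b :=
    (continuous_id.sub continuous_const).intervalIntegrable a b
  have HXA : (∫ x in a..b, (x - a)) = (b-a)^2/2 := by
    have hd : ∀ x ∈ uIcc a b, HasDerivAt (fun y => (y-a)^2/2) (x - a) x := by
      intro x _
      have := (((hasDerivAt_id x).sub_const a).pow 2).div_const 2
      simpa using this
    rw [integral_eq_sub_of_hasDerivAt hd hXint]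
    ring
  have Hnn : 0 ≤ ∫ x in a..b, ((x - a) - q x * P x) :=
    integral_nonneg hab' fun x hx => sub_nonneg.2 (hWle x hx)
  have Hval : (∫ x in a..b, ((x - a) - q x * P x))
      = (b-a)^2/2 - ((S-T)^2/2 + (2*I - 2*(h a)*S) - T^2) := by
    rw [integral_sub hXint hqPint, HXA, HqP]
  have Hineq : 2*I ≤ 2*((b-a)/2)^2 + h a^2 + h b^2 := by
    nlinarith [Hnn, Hval, sq_nonneg (h a + h b - S), hTdef]
  -- ====== forward equality direction ======
  have hforward : 2*I = 2*((b-a)/2)^2 + h a^2 + h b^2 →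
      ∃ α : ℝ, ∀ x ∈ Icc a b,
        h x = α * x + (Real.sqrt (1 + α ^ 2) - α) / 2 * b
          - (Real.sqrt (1 + α ^ 2) + α) / 2 * a := by
    intro Heq
    have key : (∫ x in a..b, ((x - a) - q x * P x))
        = (b-a)^2/2 - ((S-(h b - h a))^2/2 + (2*I - 2*(h a)*S) - (h b - h a)^2) := by
      rw [Hval, hTdef]
    have hsum : (∫ x in a..b, ((x - a) - q x * P x)) + (h a + h b - S)^2/2 = 0 := by
      linear_combination key - Heq
    have hB := sq_nonneg (h a + h b - S)
    have hA0 : (∫ x in a..b, ((x - a) - q x * P x)) = 0 := by linarith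
    have hS0 : h a + h b = S := by
      have h2 : (h a + h b - S)^2 = 0 := by linarith
      have := pow_eq_zero_iff (n := 2) (by norm_num) |>.mp h2
      linarith
    set g : ℝ → ℝ := fun x => (x - a) - q x * P x with hgdef
    have hgint : IntervalIntegrable g volume a b := hXint.sub hqPint
    have haeg : g =ᵐ[volume.restrict (Ioc a b)] 0 :=
      (integral_eq_zero_iff_of_le_of_nonneg_ae hab'
        ((ae_restrict_iff' measurableSet_Ioc).2 (ae_of_all _ fun x hx =>
          sub_nonneg.2 (hWle x (Ioc_subset_Icc_self hx)))) hgint).mp hA0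
    have haeg' : ∀ᵐ x ∂(volume : Measure ℝ), x ∈ Ioc a b → g x = 0 :=
      (ae_restrict_iff' measurableSet_Ioc).1 haeg
    have getE : ∀ c d, a ≤ c → c < d → d ≤ b → ∃ x, x ∈ Ioo c d ∧ g x = 0 := by
      intro c d hac hcd hdb
      have hsub2 : Ioo c d ⊆ Ioc a b := fun z hz =>
        ⟨hac.trans_lt hz.1, hz.2.le.trans hdb⟩
      have hne : volume.restrict (Ioo c d) ≠ 0 := by
        rw [Ne, Measure.restrict_eq_zero, Real.volume_Ioo]
        simp only [ENNReal.ofReal_eq_zero, not_le]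
        linarith
      haveI : (ae (volume.restrict (Ioo c d))).NeBot := ae_neBot.2 hne
      have h1 : ∀ᵐ x ∂(volume.restrict (Ioo c d)), g x = 0 ∧ x ∈ Ioo c d := by
        filter_upwards [ae_restrict_of_ae haeg', ae_restrict_mem measurableSet_Ioo]
          with x h1 h2
        exact ⟨h1 (hsub2 h2), h2⟩
      obtain ⟨x, hx1, hx2⟩ := h1.exists
      exact ⟨x, hx2, hx1⟩
    have hpae : ∀ x ∈ Ioc a b, g x = 0 →
        (fun y => p x - p y) =ᵐ[volume.restrict (Ioc a x)] 0 := by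
      intro x hx hgx
      have hq0 : 0 < q x := q_pos (h' x)
      have hxIcc : x ∈ Icc a b := Ioc_subset_Icc_self hx
      have hPx : P x = (x - a) * p x := by
        have h1 : q x * P x = x - a := by
          have : (x - a) - q x * P x = 0 := hgx
          linarith
        have h2 : q x * ((x - a) * p x) = x - a := by
          have h3 : q x * p x = 1 := qp_one (h' x)
          calc q x * ((x - a) * p x) = (x-a) * (q x * p x) := by ring
            _ = x - a := by rw [h3, mul_one]
        exact mul_left_cancel₀ hq0.ne' (h1.trans h2.symm)
      have hint : IntervalIntegrable (fun y => p x - p y) volume a x :=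
        intervalIntegrable_const.sub (hsub x hxIcc hpi)
      have hzero : (∫ y in a..x, (p x - p y)) = 0 := by
        rw [integral_sub intervalIntegrable_const (hsub x hxIcc hpi),
          intervalIntegral.integral_const, smul_eq_mul]
        have : (∫ y in a..x, p y) = P x := rfl
        rw [this, hPx]; ring
      exact (integral_eq_zero_iff_of_le_of_nonneg_ae hx.1.le
        ((ae_restrict_iff' measurableSet_Ioc).2 (ae_of_all _ fun y hy =>
          sub_nonneg.2 (hpmono ⟨hy.1.le, hy.2.trans hxIcc.2⟩ hxIcc hy.2))) hint).mp hzero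
    have hclaim1 : ∀ x1 x2, x1 ∈ Ioc a b → x2 ∈ Ioc a b → g x1 = 0 → g x2 = 0 →
        x1 ≤ x2 → p x1 = p x2 := by
      intro x1 x2 hx1 hx2 hg1 hg2 hle
      have h1 := hpae x1 hx1 hg1
      have h2 : (fun y => p x2 - p y) =ᵐ[volume.restrict (Ioc a x1)] 0 :=
        ae_restrict_of_ae_restrict_of_subset (Ioc_subset_Ioc le_rfl hle) (hpae x2 hx2 hg2)
      have hne : volume.restrict (Ioc a x1) ≠ 0 := by
        rw [Ne, Measure.restrict_eq_zero, Real.volume_Ioc]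
        simp only [ENNReal.ofReal_eq_zero, not_le]
        linarith [hx1.1]
      haveI : (ae (volume.restrict (Ioc a x1))).NeBot := ae_neBot.2 hne
      obtain ⟨y, hy1, hy2⟩ := (h1.and h2).exists
      have e1 : p x1 - p y = 0 := hy1
      have e2 : p x2 - p y = 0 := hy2
      linarith
    have hpconst : ∀ z1 ∈ Ioo a b, ∀ z2 ∈ Ioo a b, p z1 = p z2 := by
      intro z1 hz1 z2 hz2
      obtain ⟨x1, hx1, hgx1⟩ := getE a (min z1 z2) le_rfl (lt_min hz1.1 hz2.1)
        ((min_le_left _ _).trans hz1.2.le)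
      obtain ⟨x2, hx2, hgx2⟩ := getE (max z1 z2) b
        (le_max_iff.2 (Or.inl hz1.1.le)) (max_lt hz1.2 hz2.2) le_rfl
      have hx1m : x1 ∈ Ioc a b := ⟨hx1.1, hx1.2.le.trans (((min_le_left _ _).trans hz1.2.le))⟩
      have hx2m : x2 ∈ Ioc a b := ⟨(le_max_iff.2 (Or.inl hz1.1.le)).trans_lt hx2.1, hx2.2.le⟩
      have hx12 : x1 ≤ x2 := by
        have := hx1.2.trans_le ((min_le_left z1 z2).trans (le_max_left z1 z2))
        linarith [hx2.1, this]
      have heq12 := hclaim1 x1 x2 hx1m hx2m hgx1 hgx2 hx12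
      have hx1I : x1 ∈ Icc a b := Ioc_subset_Icc_self hx1m
      have hx2I : x2 ∈ Icc a b := Ioc_subset_Icc_self hx2m
      have hz1I : z1 ∈ Icc a b := Ioo_subset_Icc_self hz1
      have hz2I : z2 ∈ Icc a b := Ioo_subset_Icc_self hz2
      have l1 : p x1 ≤ p z1 := hpmono hx1I hz1I (hx1.2.trans_le (min_le_left _ _)).le
      have l2 : p z1 ≤ p x2 := hpmono hz1I hx2I ((le_max_left z1 z2).trans hx2.1.le)
      have l3 : p x1 ≤ p z2 := hpmono hx1I hz2I (hx1.2.trans_le (min_le_right _ _)).le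
      have l4 : p z2 ≤ p x2 := hpmono hz2I hx2I ((le_max_right z1 z2).trans hx2.1.le)
      linarith [heq12]
    set α : ℝ := h' ((a+b)/2) with hαdef
    have hmem0 : (a+b)/2 ∈ Ioo a b := ⟨by linarith, by linarith⟩
    have hth : ∀ z ∈ Ioo a b, h' z = α := by
      intro z hz
      have hpz := hpconst z hz _ hmem0
      apply p_inj
      simpa only [hpdef, hσdef, add_comm] using hpz
    have hae_b : ∀ᵐ (y : ℝ) ∂(volume : Measure ℝ), y ≠ b := by
      refine ae_iff.mpr ?_
      simp only [ne_eq, not_not, setOf_eq_eq_singleton]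
      exact Real.volume_singleton
    have hlin : ∀ x ∈ Icc a b, h x = h a + α * (x - a) := by
      intro x hx
      have h1 : (∫ y in a..x, h' y) = ∫ y in a..x, α := by
        apply intervalIntegral.integral_congr_ae
        filter_upwards [hae_b] with y hyb hy
        rw [uIoc_of_le hx.1] at hy
        exact hth y ⟨hy.1, lt_of_le_of_ne (hy.2.trans hx.2) hyb⟩
      have h2 := hftc x hx
      rw [h1, intervalIntegral.integral_const, smul_eq_mul] at h2
      linarith
    have hSval : S = Real.sqrt (1 + α^2) * (b - a) := by
      have h1 : (∫ x in a..b, σ x) = ∫ x in a..b, Real.sqrt (1+α^2) := by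
        apply intervalIntegral.integral_congr_ae
        filter_upwards [hae_b] with y hyb hy
        rw [uIoc_of_le hab'] at hy
        have := hth y ⟨hy.1, lt_of_le_of_ne hy.2 hyb⟩
        simp only [hσdef, this]
      rw [hSdef, h1, intervalIntegral.integral_const, smul_eq_mul]
      ring
    refine ⟨α, fun x hx => ?_⟩
    rw [hlin x hx]
    have hb' := hlin b ⟨hab', le_rfl⟩
    have key2 : 2 * h a = (Real.sqrt (1+α^2) - α)*(b-a) := by
      rw [hSval] at hS0
      linear_combination hS0 - hb'
    linear_combination key2 / 2
  -- ====== backward equality direction ======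
  have hbackward : ∀ α : ℝ, (∀ x ∈ Icc a b,
        h x = α * x + (Real.sqrt (1 + α ^ 2) - α) / 2 * b
          - (Real.sqrt (1 + α ^ 2) + α) / 2 * a) →
      2*I = 2*((b-a)/2)^2 + h a^2 + h b^2 := by
    intro α hα
    have hs2 : (Real.sqrt (1 + α^2))^2 = 1 + α^2 := sigma_sq α
    set C : ℝ := (Real.sqrt (1 + α ^ 2) - α) / 2 * b
          - (Real.sqrt (1 + α ^ 2) + α) / 2 * a with hCdef
    have hα' : ∀ x ∈ Icc a b, h x = α * x + C := fun x hx => by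
      rw [hα x hx]; ring
    have hth2 : ∀ x ∈ Icc a b, h' x = α := by
      intro x hx
      have base : HasDerivWithinAt (fun y => α * y + C) α (Icc a b) x := by
        have := ((hasDerivAt_id x).const_mul α).add_const C
        simpa using this.hasDerivWithinAt
      have hh : HasDerivWithinAt h α (Icc a b) x :=
        base.congr (fun y hy => hα' y hy) (hα' x hx)
      exact (uniqueDiffOn_Icc hab x hx).eq_deriv _ (hderiv x hx) hh
    have hIntLin : (∫ x in a..b, (α * x + C)) = α*(b^2-a^2)/2 + C*(b-a) := by
      have hd : ∀ x ∈ uIcc a b, HasDerivAt (fun y => α*y^2/2 + C*y) (α * x + C) x := by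
        intro x _
        have h1 := (((hasDerivAt_id' x).fun_pow 2).const_mul α).div_const 2
        have h2 := (hasDerivAt_id' x).const_mul C
        have := h1.fun_add h2
        refine this.congr_deriv ?_
        simp; ring
      rw [integral_eq_sub_of_hasDerivAt hd
        (((continuous_const.mul continuous_id).add continuous_const).intervalIntegrable a b)]
      ring
    have hIval : I = (α*(b^2-a^2)/2 + C*(b-a)) * Real.sqrt (1 + α^2) := by
      rw [hIdef, ← hIntLin, ← intervalIntegral.integral_mul_const]
      refine intervalIntegral.integral_congr fun x hx => ?_
      rw [hicc] at hx
      rw [hα' x hx]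
      simp only [hσdef, hth2 x hx]
    have hea : h a = α * a + C := hα' a ⟨le_rfl, hab'⟩
    have heb : h b = α * b + C := hα' b ⟨hab', le_rfl⟩
    rw [hIval, hea, heb, hCdef]
    linear_combination ((b-a)^2/2) * hs2
  exact ⟨Hineq, fun Heq => hforward Heq, fun ⟨α, hα⟩ => hbackward α hα⟩
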